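/- arXiv:1501.00169 — 4 statements merged into one kernel-verified Lean document; each statement's English description precedes it below -/
import Mathlib

section
/- The map h : ℂ² → ℂ × ℝ, h(z,w) = (2·z·conj(w), |z|² − |w|²), maps the sphere of radius r centered at 0 in ℂ² onto the sphere of radius r² centered at 0 in ℂ × ℝ, for every r ≥ 0. -/
/-- The quadratic model of the Hopf quotient map. -/
noncomputable def hopfModel (p : ℂ × ℂ) : ℂ × ℝ :=
  (2 * p.1 * (starRingEnd ℂ) p.2, ‖p.1‖ ^ 2 - ‖p.2‖ ^ 2)

/--  maps the sphere of radius  in  onto the sphere of radius 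
in  (Euclidean norms), for every . -/
theorem hopfModel_image_sphere (r : ℝ) (hr : 0 ≤ r) :
    hopfModel '' {p : ℂ × ℂ |
        Real.sqrt (‖p.1‖ ^ 2 + ‖p.2‖ ^ 2) = r}
      = {q : ℂ × ℝ | Real.sqrt (‖q.1‖ ^ 2 + q.2 ^ 2) = r ^ 2} := by
  ext ⟨a, t⟩
  simp only [Set.mem_image, Set.mem_setOf_eq]
  constructor
  · rintro ⟨⟨z, w⟩, hzw, heq⟩
    obtain ⟨rfl, rfl⟩ : (hopfModel (z, w)).1 = a ∧ (hopfModel (z, w)).2 = t :=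
      ⟨congrArg Prod.fst heq, congrArg Prod.snd heq⟩
    have hX : (0:ℝ) ≤ ‖z‖ ^ 2 + ‖w‖ ^ 2 := by positivity
    have h1 : ‖z‖ ^ 2 + ‖w‖ ^ 2 = r ^ 2 := by
      have := congrArg (· ^ 2) hzw
      simpa [Real.sq_sqrt hX] using this
    have habs : ‖2 * z * (starRingEnd ℂ) w‖
        = 2 * ‖z‖ * ‖w‖ := by
      simp [map_mul, Complex.norm_conj, Complex.norm_two]
    simp only [hopfModel, habs]
    have : (2 * ‖z‖ * ‖w‖) ^ 2
        + (‖z‖ ^ 2 - ‖w‖ ^ 2) ^ 2 = (r ^ 2) ^ 2 := by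
      nlinarith [h1]
    rw [this, Real.sqrt_sq (by positivity)]
  · intro hq
    have hX : (0:ℝ) ≤ ‖a‖ ^ 2 + t ^ 2 := by positivity
    have h1 : ‖a‖ ^ 2 + t ^ 2 = (r ^ 2) ^ 2 := by
      have := congrArg (· ^ 2) hq
      simpa [Real.sq_sqrt hX] using this
    have ht : t ≤ r ^ 2 ∧ -(r ^ 2) ≤ t := by
      constructor <;> nlinarith [sq_nonneg (‖a‖), sq_nonneg (t - r^2), sq_nonneg (t + r^2)]
    by_cases hc : r ^ 2 + t = 0
    · -- then t = -r^2 and a = 0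
      have ht' : t = -(r ^ 2) := by linarith
      have ha : ‖a‖ = 0 := by
        have : ‖a‖ ^ 2 = 0 := by nlinarith
        nlinarith [norm_nonneg a]
      have ha0 : a = 0 := by simpa using ha
      refine ⟨(0, (r : ℂ)), ?_, ?_⟩
      · simp [Complex.norm_real, abs_of_nonneg hr, Real.sqrt_sq hr]
      · simp [hopfModel, ha0, ht', Complex.norm_real, abs_of_nonneg hr]
    · have hpos : 0 < r ^ 2 + t := lt_of_le_of_ne (by linarith [ht.2]) (Ne.symm hc)
      set s : ℝ := Real.sqrt ((r ^ 2 + t) / 2) with hs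
      have hs_pos : 0 < s := Real.sqrt_pos.mpr (by linarith)
      have hs_sq : s ^ 2 = (r ^ 2 + t) / 2 := Real.sq_sqrt (by linarith)
      refine ⟨((s : ℂ), (starRingEnd ℂ) a / (2 * s)), ?_, ?_⟩
      · have habsz : ‖(s : ℂ)‖ = s := by
          simp [Complex.norm_real, abs_of_pos hs_pos]
        have habsw : ‖(starRingEnd ℂ) a / (2 * (s:ℂ))‖
            = ‖a‖ / (2 * s) := by
          simp [map_div₀, map_mul, Complex.norm_conj, Complex.norm_two,
            Complex.norm_real, abs_of_pos hs_pos]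
        have hsum : ‖(s : ℂ)‖ ^ 2
            + ‖(starRingEnd ℂ) a / (2 * (s:ℂ))‖ ^ 2 = r ^ 2 := by
          rw [habsz, habsw]
          have h2s : (2 * s) ^ 2 = 2 * (r ^ 2 + t) := by nlinarith [hs_sq]
          field_simp
          nlinarith [hs_sq, h1]
        show Real.sqrt (‖(s:ℂ)‖ ^ 2
            + ‖(starRingEnd ℂ) a / (2 * (s:ℂ))‖ ^ 2) = r
        rw [hsum, Real.sqrt_sq hr]
      · have hsne : ((s : ℂ)) ≠ 0 := by
          simpa using (Complex.ofReal_ne_zero.mpr (ne_of_gt hs_pos))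
        have h2 : (2 * (s:ℂ) * ((starRingEnd ℂ) ((starRingEnd ℂ) a / (2 * (s:ℂ))))) = a := by
          rw [map_div₀, map_mul]
          simp only [Complex.conj_conj, map_ofNat, Complex.conj_ofReal]
          field_simp
        have habsz : ‖(s : ℂ)‖ = s := by
          simp [Complex.norm_real, abs_of_pos hs_pos]
        have habsw : ‖(starRingEnd ℂ) a / (2 * (s:ℂ))‖
            = ‖a‖ / (2 * s) := by
          simp [map_div₀, map_mul, Complex.norm_conj, Complex.norm_two,
            Complex.norm_real, abs_of_pos hs_pos]
        have hsnd : ‖(s:ℂ)‖ ^ 2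
            - ‖(starRingEnd ℂ) a / (2 * (s:ℂ))‖ ^ 2 = t := by
          rw [habsz, habsw]
          have h2s : (2 * s) ^ 2 = 2 * (r ^ 2 + t) := by nlinarith [hs_sq]
          field_simp
          nlinarith [hs_sq, h1]
        simp only [hopfModel]
        exact Prod.ext h2 hsnd
end

section
/- For the map h : ℂ² → ℂ × ℝ, h(z,w) = (2·z·conj(w), |z|² − |w|²): if h(z₁,w₁) = h(z₂,w₂) and (z₁,w₁) ≠ (0,0), then there exists λ ∈ ℂ with |λ| = 1 such that (z₂,w₂) = (λ·z₁, λ·w₁). Hence each nonzero fiber of h is a single orbit of the Hopf circle action. -/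
/-- Each nonzero fiber of  is a single orbit of the Hopf circle action. -/
theorem hopfModel_fiber_orbit (z₁ w₁ z₂ w₂ : ℂ)
    (h : hopfModel (z₁, w₁) = hopfModel (z₂, w₂)) (hne : (z₁, w₁) ≠ (0, 0)) :
    ∃ lam : ℂ, ‖lam‖ = 1 ∧ (z₂, w₂) = (lam * z₁, lam * w₁) := by
  simp only [hopfModel, Prod.mk.injEq] at h
  obtain ⟨h1, h2⟩ := h
  set a := ‖z₁‖ with ha
  set b := ‖w₁‖ with hb
  set c := ‖z₂‖ with hc
  set d := ‖w₂‖ with hd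
  have ha0 : 0 ≤ a := norm_nonneg _
  have hb0 : 0 ≤ b := norm_nonneg _
  have hc0 : 0 ≤ c := norm_nonneg _
  have hd0 : 0 ≤ d := norm_nonneg _
  have hab : a * b = c * d := by
    have := congrArg (‖·‖) h1
    simpa [norm_mul, Complex.norm_conj, ha, hb, hc, hd, mul_assoc] using this
  have hsum : a ^ 2 + b ^ 2 = c ^ 2 + d ^ 2 := by
    have hsq : (a ^ 2 + b ^ 2) ^ 2 = (c ^ 2 + d ^ 2) ^ 2 := by
      linear_combination (a^2 - b^2 + c^2 - d^2) * h2 + (4*a*b + 4*c*d) * hab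
    nlinarith [hsq, sq_nonneg (a^2+b^2+c^2+d^2), sq_nonneg (a^2+b^2-c^2-d^2), sq_nonneg a, sq_nonneg b, sq_nonneg c, sq_nonneg d]
  have hac : a = c := by nlinarith [h2, hsum]
  have hbd : b = d := by nlinarith [h2, hsum]
  have h1' : z₁ * (starRingEnd ℂ) w₁ = z₂ * (starRingEnd ℂ) w₂ := by
    have := h1
    field_simp at this
    linear_combination this
  by_cases hw : w₁ = 0
  · have hz1 : z₁ ≠ 0 := by
      intro hz; exact hne (by simp [hz, hw])
    have hw2 : w₂ = 0 := by
      have : d = 0 := by rw [← hbd, hb, hw]; simp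
      exact norm_eq_zero.mp this
    refine ⟨z₂ / z₁, ?_, ?_⟩
    · rw [norm_div]
      rw [← ha, ← hc, ← hac]
      exact div_self (by simpa [ha] using norm_ne_zero_iff.mpr hz1)
    · simp [hw, hw2, div_mul_cancel₀, hz1]
  · have hw2 : w₂ ≠ 0 := by
      intro hz
      apply hw
      apply norm_eq_zero.mp
      rw [← hb, hbd, hd, hz]; simp
    refine ⟨w₂ / w₁, ?_, ?_⟩
    · rw [norm_div, ← hd, ← hb, ← hbd]
      exact div_self (by simpa [hb] using hw)
    · have key : z₂ * w₁ = z₁ * w₂ := by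
        have hc2 : (starRingEnd ℂ) w₂ ≠ 0 := by simpa using hw2
        apply mul_right_cancel₀ hc2
        have e1 : w₁ * (starRingEnd ℂ) w₁ = (Complex.normSq w₁ : ℂ) := Complex.mul_conj w₁
        have e2 : w₂ * (starRingEnd ℂ) w₂ = (Complex.normSq w₂ : ℂ) := Complex.mul_conj w₂
        have hn : (Complex.normSq w₁ : ℂ) = (Complex.normSq w₂ : ℂ) := by
          norm_cast
          have hb2 : b ^ 2 = d ^ 2 := by rw [hbd]
          simpa [hb, hd, Complex.sq_norm] using hb2
        linear_combination w₁ * h1'.symm + z₁ * e1 - z₁ * e2 + z₁ * hn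
      simp only [Prod.mk.injEq]
      refine ⟨?_, ?_⟩
      · field_simp
        linear_combination key
      · rw [div_mul_cancel₀ _ hw]
end

section
/- The map h : ℂ² → ℂ × ℝ, h(z,w) = (2·z·conj(w), |z|² − |w|²), restricted to the unit sphere S³ ⊂ ℂ² gives a continuous surjection onto the unit sphere S² ⊂ ℂ × ℝ, and the preimage of each point of S² is a single orbit of the Hopf circle action on S³. -/
/-- The restriction of `hopfModel` to the unit sphere `S³ ⊂ ℂ²` is a continuous
surjection onto the unit sphere `S² ⊂ ℂ × ℝ`, and the preimage of each point is
a single orbit of the Hopf circle action. -/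
theorem hopfModel_sphere_restriction
    (H : {p : ℂ × ℂ // ‖p.1‖ ^ 2 + ‖p.2‖ ^ 2 = 1} →
         {q : ℂ × ℝ // ‖q.1‖ ^ 2 + q.2 ^ 2 = 1})
    (hH : ∀ p, (H p : ℂ × ℝ) = hopfModel p) :
    Continuous H ∧ Function.Surjective H ∧
      ∀ p p', H p = H p' ↔
        ∃ lam : ℂ, ‖lam‖ = 1 ∧
          (p' : ℂ × ℂ) = (lam * (p : ℂ × ℂ).1, lam * (p : ℂ × ℂ).2) := by
  refine ⟨?_, ?_, ?_⟩
  · rw [continuous_induced_rng]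
    have : (Subtype.val ∘ H) = fun p => hopfModel p.val := funext fun p => hH p
    rw [this]
    exact ((continuous_const.mul ((continuous_fst.comp continuous_subtype_val))).mul
      (Complex.continuous_conj.comp (continuous_snd.comp continuous_subtype_val))).prodMk
      (((continuous_norm.comp (continuous_fst.comp continuous_subtype_val)).pow 2).sub
        ((continuous_norm.comp (continuous_snd.comp continuous_subtype_val)).pow 2))
  · rintro ⟨⟨a, t⟩, hq⟩
    simp only at hq
    have hab := norm_nonneg a
    have ht2 : -1 ≤ t := by nlinarith
    by_cases ht : t = -1
    · have ha : a = 0 := by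
        have : ‖a‖ = 0 := by nlinarith
        simpa using this
      refine ⟨⟨(0, 1), by simp⟩, ?_⟩
      apply Subtype.ext
      rw [hH]
      simp [hopfModel, ha, ht]
    · have htpos : 0 < 1 + t := by
        rcases lt_or_eq_of_le ht2 with h | h
        · linarith
        · exact absurd h.symm ht
      set r := Real.sqrt ((1 + t) / 2) with hrdef
      have hr2 : r ^ 2 = (1 + t) / 2 := Real.sq_sqrt (by linarith)
      have hrpos : 0 < r := Real.sqrt_pos.2 (by linarith)
      have hrne : (r : ℂ) ≠ 0 := by exact_mod_cast hrpos.ne'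
      refine ⟨⟨((r : ℂ), (starRingEnd ℂ) a / (2 * r)), ?_⟩, ?_⟩
      · simp only [norm_div, norm_mul, Complex.norm_real, Real.norm_eq_abs, Complex.norm_conj,
          Complex.norm_two, abs_of_pos hrpos]
        rw [div_pow]
        have : ‖a‖ ^ 2 = 1 - t ^ 2 := by linarith
        rw [this]
        field_simp
        ring_nf
        nlinarith
      · apply Subtype.ext
        rw [hH]
        show hopfModel ((r : ℂ), (starRingEnd ℂ) a / (2 * r)) = (a, t)
        simp only [hopfModel, Prod.mk.injEq]
        constructor
        · simp only [map_div₀, Complex.conj_conj, map_mul, Complex.conj_ofReal, map_ofNat]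
          field_simp
        · simp only [norm_div, norm_mul, Complex.norm_real, Real.norm_eq_abs, Complex.norm_conj,
            Complex.norm_two, abs_of_pos hrpos, div_pow]
          have : ‖a‖ ^ 2 = 1 - t ^ 2 := by linarith
          rw [this]
          field_simp
          nlinarith
  · rintro ⟨⟨z, w⟩, hp⟩ ⟨⟨z', w'⟩, hp'⟩
    simp only at hp hp'
    constructor
    · intro h
      have h' : hopfModel (z, w) = hopfModel (z', w') := by
        have := congrArg Subtype.val h
        rw [hH, hH] at this
        exact this
      simp only [hopfModel, Prod.mk.injEq] at h'
      obtain ⟨h1, h2⟩ := h'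
      have hz : ‖z‖ = ‖z'‖ := by
        nlinarith [norm_nonneg z, norm_nonneg z']
      have hw : ‖w‖ = ‖w'‖ := by
        nlinarith [norm_nonneg w, norm_nonneg w']
      by_cases hz0 : z = 0
      · have hz'0 : z' = 0 := by
          have : ‖z'‖ = 0 := by rw [← hz, hz0, norm_zero]
          simpa using this
        have hw0 : w ≠ 0 := by
          intro hw0
          rw [hz0, hw0] at hp
          simp at hp
        refine ⟨w' / w, ?_, ?_⟩
        · rw [norm_div, ← hw, div_self (norm_ne_zero_iff.mpr hw0)]
        · show (z', w') = (w' / w * z, w' / w * w)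
          rw [hz0, hz'0, Prod.mk.injEq]
          refine ⟨by rw [mul_zero], ?_⟩
          field_simp
      · have hz'0 : z' ≠ 0 := by
          intro hc
          rw [hc, norm_zero] at hz
          exact hz0 (by simpa using hz)
        have hcz : (starRingEnd ℂ) z ≠ 0 := by
          simpa using hz0
        have habs : z * (starRingEnd ℂ) z = z' * (starRingEnd ℂ) z' := by
          rw [Complex.mul_conj, Complex.mul_conj]
          norm_cast
          rw [← Complex.sq_norm, ← Complex.sq_norm, hz]
        have h1' : z * (starRingEnd ℂ) w = z' * (starRingEnd ℂ) w' := by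
          apply mul_left_cancel₀ (two_ne_zero (α := ℂ))
          linear_combination h1
        have hc : (starRingEnd ℂ) z * w = (starRingEnd ℂ) z' * w' := by
          have := congrArg (starRingEnd ℂ) h1'
          simpa [map_mul, Complex.conj_conj] using this
        have key : (starRingEnd ℂ) z * (z' * w) = (starRingEnd ℂ) z * (z * w') := by
          linear_combination z' * hc - w' * habs
        have hzw : z' * w = z * w' := mul_left_cancel₀ hcz key
        refine ⟨z' / z, ?_, ?_⟩
        · rw [norm_div, ← hz, div_self (norm_ne_zero_iff.mpr hz0)]
        · show (z', w') = (z' / z * z, z' / z * w)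
          rw [Prod.mk.injEq]
          constructor
          · field_simp
          · field_simp
            linear_combination -hzw
    · rintro ⟨lam, hlam, hpp⟩
      rw [Prod.mk.injEq] at hpp
      obtain ⟨e1, e2⟩ := hpp
      apply Subtype.ext
      rw [hH, hH]
      show hopfModel (z, w) = hopfModel (z', w')
      rw [e1, e2]
      have hl : lam * (starRingEnd ℂ) lam = 1 := by
        rw [Complex.mul_conj]
        norm_cast
        rw [← Complex.sq_norm, hlam, one_pow]
      simp only [hopfModel, map_mul, norm_mul, hlam, one_mul, Prod.mk.injEq]
      constructor
      · linear_combination (-2) * z * (starRingEnd ℂ) w * hl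
      · trivial
end

section
/- The map h : ℂ² → ℂ × ℝ, h(z,w) = (2·z·conj(w), |z|² − |w|²), induces a homeomorphism from the quotient of ℂ² by the Hopf circle action onto ℂ × ℝ. -/
open Topology

/-- The orbit relation of the Hopf circle action on `ℂ²`. -/
def hopfRel (p q : ℂ × ℂ) : Prop :=
  ∃ lam : ℂ, ‖lam‖ = 1 ∧ q = (lam * p.1, lam * p.2)

lemma hopfModel_continuous : Continuous hopfModel := by
  unfold hopfModel
  refine Continuous.prodMk ?_ ?_
  · exact ((continuous_const.mul continuous_fst).mul
      (Complex.continuous_conj.comp continuous_snd))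
  · exact ((continuous_norm.comp continuous_fst).pow 2).sub
      ((continuous_norm.comp continuous_snd).pow 2)

lemma hopfModel_rel {p q : ℂ × ℂ} (h : hopfRel p q) : hopfModel p = hopfModel q := by
  obtain ⟨l, hl, rfl⟩ := h
  have h1 : l * (starRingEnd ℂ) l = 1 := by
    rw [Complex.mul_conj]
    norm_cast
    rw [← Complex.sq_norm, hl, one_pow]
  simp only [hopfModel, map_mul, Prod.mk.injEq]
  constructor
  · linear_combination (-2 : ℂ) * p.1 * (starRingEnd ℂ) p.2 * h1
  · rw [norm_mul, norm_mul, hl]; ring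

lemma hopfModel_surjective : Function.Surjective hopfModel := by
  rintro ⟨c, t⟩
  by_cases hc : c = 0
  · subst hc
    rcases le_or_gt 0 t with ht | ht
    · refine ⟨(Real.sqrt t, 0), ?_⟩
      simp [hopfModel, Complex.norm_real, Real.norm_eq_abs, abs_of_nonneg (Real.sqrt_nonneg t),
        Real.sq_sqrt ht]
    · refine ⟨(0, Real.sqrt (-t)), ?_⟩
      simp [hopfModel, Complex.norm_real, Real.norm_eq_abs, abs_of_nonneg (Real.sqrt_nonneg (-t)),
        Real.sq_sqrt (neg_nonneg.2 ht.le)]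
  · set r : ℝ := Real.sqrt (‖c‖ ^ 2 + t ^ 2) with hr
    have hcpos : 0 < ‖c‖ := norm_pos_iff.mpr hc
    have hrt : |t| < r := by
      rw [hr]
      have h1 : t ^ 2 < ‖c‖ ^ 2 + t ^ 2 := by nlinarith
      calc |t| = Real.sqrt (t ^ 2) := by rw [Real.sqrt_sq_eq_abs]
        _ < _ := Real.sqrt_lt_sqrt (sq_nonneg t) h1
    have ha : 0 < (r + t) / 2 := by
      have := neg_abs_le t; linarith
    set z : ℂ := ((Real.sqrt ((r + t) / 2) : ℝ) : ℂ) with hz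
    have hzpos : (0:ℝ) < Real.sqrt ((r + t) / 2) := Real.sqrt_pos.2 ha
    have hzne : z ≠ 0 := by
      rw [hz]
      exact_mod_cast Complex.ofReal_ne_zero.mpr hzpos.ne'
    refine ⟨(z, (starRingEnd ℂ) c / (2 * z)), ?_⟩
    have habs_z : ‖z‖ ^ 2 = (r + t) / 2 := by
      rw [hz, Complex.norm_real, Real.norm_eq_abs, abs_of_nonneg hzpos.le]
      exact Real.sq_sqrt ha.le
    have hr2 : r ^ 2 = ‖c‖ ^ 2 + t ^ 2 := Real.sq_sqrt (by positivity)
    have habs_w : ‖(starRingEnd ℂ) c / (2 * z)‖ ^ 2 = (r - t) / 2 := by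
      rw [norm_div, norm_mul, Complex.norm_conj, div_pow, mul_pow, habs_z,
        Complex.norm_two]
      rw [div_eq_iff (by positivity)]
      nlinarith
    have hzc : (starRingEnd ℂ) z = z := by rw [hz, Complex.conj_ofReal]
    unfold hopfModel
    simp only [Prod.mk.injEq]
    constructor
    · rw [map_div₀, Complex.conj_conj, map_mul, hzc,
        map_ofNat (starRingEnd ℂ) 2]
      field_simp
    · rw [habs_z, habs_w]; ring

lemma hopfRel_of_eq {p q : ℂ × ℂ} (h : hopfModel p = hopfModel q) : hopfRel p q := by
  obtain ⟨z, w⟩ := p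
  obtain ⟨z', w'⟩ := q
  simp only [hopfModel, Prod.mk.injEq] at h
  obtain ⟨h1, h2⟩ := h
  set a := ‖z‖ with hadef
  set b := ‖w‖ with hbdef
  set a' := ‖z'‖ with ha'def
  set b' := ‖w'‖ with hb'def
  have h0 : (0:ℝ) ≤ a := norm_nonneg z
  have h0' : (0:ℝ) ≤ a' := norm_nonneg z'
  have h0w : (0:ℝ) ≤ b := norm_nonneg w
  have h0w' : (0:ℝ) ≤ b' := norm_nonneg w'
  have habs : a * b = a' * b' := by
    have := congrArg norm h1
    simpa [norm_mul, Complex.norm_conj, Complex.norm_two, mul_assoc,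
      hadef, hbdef, ha'def, hb'def] using this
  have hS2 : (a ^ 2 + b ^ 2) ^ 2 = (a' ^ 2 + b' ^ 2) ^ 2 := by
    linear_combination (a ^ 2 - b ^ 2 + a' ^ 2 - b' ^ 2) * h2 +
      (4 * (a * b) + 4 * (a' * b')) * habs
  have hS : a ^ 2 + b ^ 2 = a' ^ 2 + b' ^ 2 := by
    have := congrArg Real.sqrt hS2
    rwa [Real.sqrt_sq (by positivity), Real.sqrt_sq (by positivity)] at this
  have ha2 : a ^ 2 = a' ^ 2 := by linarith
  have hb2 : b ^ 2 = b' ^ 2 := by linarith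
  have hzz : a = a' := by
    have := congrArg Real.sqrt ha2
    rwa [Real.sqrt_sq h0, Real.sqrt_sq h0'] at this
  have hww : b = b' := by
    have := congrArg Real.sqrt hb2
    rwa [Real.sqrt_sq h0w, Real.sqrt_sq h0w'] at this
  by_cases hz0 : z = 0
  · subst hz0
    have hz'0 : z' = 0 := by
      apply norm_eq_zero.mp
      rw [← ha'def, ← hzz, hadef]
      simp
    subst hz'0
    by_cases hw0 : w = 0
    · subst hw0
      have hw'0 : w' = 0 := by
        apply norm_eq_zero.mp
        rw [← hb'def, ← hww, hbdef]; simp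
      exact ⟨1, by simp [hw'0]⟩
    · refine ⟨w' / w, ?_, ?_⟩
      · rw [norm_div, ← hb'def, ← hbdef, ← hww, div_self]
        exact fun hb => hw0 (norm_eq_zero.mp (hbdef ▸ hb))
      · simp [div_mul_cancel₀, hw0]
  · have hane : a ≠ 0 := fun haz => hz0 (norm_eq_zero.mp (hadef ▸ haz))
    have hz'0 : z' ≠ 0 := fun hzz' => by
      apply hane; rw [hzz, ha'def, hzz']; simp
    have hconjz : (starRingEnd ℂ) z ≠ 0 := fun hcz => by
      apply hz0
      have := congrArg (starRingEnd ℂ) hcz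
      simpa using this
    refine ⟨z' / z, ?_, ?_⟩
    · rw [norm_div, ← ha'def, ← hadef, ← hzz, div_self hane]
    · have hc1 : z * (starRingEnd ℂ) w = z' * (starRingEnd ℂ) w' := by
        linear_combination h1 / 2
      have hc2 : (starRingEnd ℂ) z * w = (starRingEnd ℂ) z' * w' := by
        have := congrArg (starRingEnd ℂ) hc1
        simpa using this
      have hn : Complex.normSq z = Complex.normSq z' := by
        rw [← Complex.sq_norm, ← Complex.sq_norm, ← hadef, ← ha'def, hzz]
      have hmul : z * (starRingEnd ℂ) z = z' * (starRingEnd ℂ) z' := by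
        rw [Complex.mul_conj, Complex.mul_conj, hn]
      have key : (starRingEnd ℂ) z * (z' * w) = (starRingEnd ℂ) z * (z * w') := by
        linear_combination z' * hc2 - w' * hmul
      have key2 : z' * w = z * w' := mul_left_cancel₀ hconjz key
      refine Prod.ext ?_ ?_
      · simp [div_mul_cancel₀, hz0]
      · show w' = z' / z * w
        rw [div_mul_eq_mul_div, eq_div_iff hz0]
        linear_combination -key2

lemma hopfModel_isProperMap : IsProperMap hopfModel := by
  rw [isProperMap_iff_isCompact_preimage]
  refine ⟨hopfModel_continuous, fun K hK => ?_⟩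
  obtain ⟨R, hR⟩ := hK.isBounded.subset_closedBall 0
  set R₀ : ℝ := max R 0 with hR₀
  have hR₀0 : 0 ≤ R₀ := le_max_right _ _
  set M : ℝ := Real.sqrt (2 * R₀) with hM
  refine (isCompact_closedBall (0 : ℂ × ℂ) M).of_isClosed_subset
    (hK.isClosed.preimage hopfModel_continuous) ?_
  intro p hp
  have h := hR hp
  rw [Metric.mem_closedBall, dist_zero_right] at h
  have h1 : ‖(hopfModel p).1‖ ≤ R₀ := le_trans (le_trans (norm_fst_le _) h) (le_max_left _ _)
  have h2 : ‖(hopfModel p).2‖ ≤ R₀ := le_trans (le_trans (norm_snd_le _) h) (le_max_left _ _)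
  set a := ‖p.1‖ with hadef
  set b := ‖p.2‖ with hbdef
  have h0a : (0:ℝ) ≤ a := norm_nonneg _
  have h0b : (0:ℝ) ≤ b := norm_nonneg _
  have h1' : 2 * a * b ≤ R₀ := by
    have : ‖(hopfModel p).1‖ = 2 * a * b := by
      simp [hopfModel, norm_mul, Complex.norm_conj,
        Complex.norm_two, hadef, hbdef]
    linarith [this ▸ h1]
  have h2' : |a ^ 2 - b ^ 2| ≤ R₀ := by
    have : ‖(hopfModel p).2‖ = |a ^ 2 - b ^ 2| := by
      simp [hopfModel, Real.norm_eq_abs, hadef, hbdef]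
    linarith [this ▸ h2]
  have hab : a ^ 2 ≤ 2 * R₀ ∧ b ^ 2 ≤ 2 * R₀ := by
    have hle := abs_le.mp h2'
    constructor <;> nlinarith [sq_nonneg (a - b), sq_nonneg (a + b), mul_nonneg h0a h0b]
  rw [Metric.mem_closedBall, dist_zero_right, Prod.norm_def]
  have hMa : a ≤ M := by
    rw [hM]
    rw [show a = Real.sqrt (a ^ 2) from (Real.sqrt_sq h0a).symm]
    exact Real.sqrt_le_sqrt hab.1
  have hMb : b ≤ M := by
    rw [hM]
    rw [show b = Real.sqrt (b ^ 2) from (Real.sqrt_sq h0b).symm]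
    exact Real.sqrt_le_sqrt hab.2
  exact max_le (by simpa [← hadef] using hMa)
    (by simpa [← hbdef] using hMb)

/-- `hopfModel` induces a homeomorphism from the quotient of `ℂ²` by the Hopf
circle action onto `ℂ × ℝ`. -/
theorem hopfModel_quotient_homeomorph :
    ∃ e : Quot hopfRel ≃ₜ (ℂ × ℝ), ∀ p : ℂ × ℂ, e (Quot.mk hopfRel p) = hopfModel p := by
  have hsound : ∀ p q : ℂ × ℂ, hopfRel p q → hopfModel p = hopfModel q :=
    fun _ _ => hopfModel_rel
  let f : Quot hopfRel → ℂ × ℝ := Quot.lift hopfModel hsound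
  have hbij : Function.Bijective f := by
    constructor
    · intro x y h
      induction x using Quot.ind with | _ p => ?_
      induction y using Quot.ind with | _ q => ?_
      exact Quot.sound (hopfRel_of_eq h)
    · intro y
      obtain ⟨p, hp⟩ := hopfModel_surjective y
      exact ⟨Quot.mk _ p, hp⟩
  let E : Quot hopfRel ≃ (ℂ × ℝ) := Equiv.ofBijective f hbij
  have hqm : IsQuotientMap hopfModel :=
    (hopfModel_isProperMap.isClosedMap).isQuotientMap hopfModel_continuous hopfModel_surjective
  have hcontf : Continuous f := continuous_quot_lift _ hopfModel_continuous
  have hsymm : (E.symm : ℂ × ℝ → Quot hopfRel) ∘ hopfModel = Quot.mk hopfRel := by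
    funext p
    apply E.injective
    calc E (E.symm (hopfModel p)) = hopfModel p := E.apply_symm_apply _
      _ = E (Quot.mk hopfRel p) := rfl
  refine ⟨⟨E, hcontf, ?_⟩, fun p => rfl⟩
  show Continuous ⇑E.symm
  rw [hqm.continuous_iff, hsymm]
  exact continuous_quot_mk
end
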